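/- The k-SED value is efficient: for every TU game v on N, Σ_{i ∈ N} Φ^{k-SED}_i(v) = v(N). -/

import Mathlib

open Finset

/-- The Shapley value of player `i` in the TU game `v` on player set `Fin n`. -/
noncomputable def shapley (n : ℕ) (v : Finset (Fin n) → ℝ) (i : Fin n) : ℝ :=
  ∑ S ∈ (Finset.univ.erase i).powerset,
      ((S.card.factorial * (n - S.card - 1).factorial : ℝ) / n.factorial) *
        (v (insert i S) - v S)

/-- The `k`-SED value of player `i` in the TU game `v` on player set `Fin n`. -/
noncomputable def kSED (n k : ℕ) (v : Finset (Fin n) → ℝ) (i : Fin n) : ℝ :=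
  (∑ S ∈ ((Finset.univ.erase i).powerset.filter (fun S => S.card = k - 1)),
      (((n - k).factorial * (k - 1).factorial : ℝ) / n.factorial) * v (insert i S))
  + ∑ S ∈ ((Finset.univ.erase i).powerset.filter (fun S => k ≤ S.card)),
      (((n - S.card - 1).factorial * S.card.factorial : ℝ) / n.factorial) *
        (v (insert i S) - v S)


noncomputable def kc (n s : ℕ) : ℝ := ((n - s).factorial * s.factorial : ℝ) / n.factorial

noncomputable def kA (n : ℕ) (v : Finset (Fin n) → ℝ) (s : ℕ) : ℝ :=
  ∑ T ∈ Finset.univ.powerset.filter (fun T : Finset (Fin n) => T.card = s), v T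

lemma sum_ins (n s : ℕ) (f : Finset (Fin n) → ℝ) :
    ∑ i : Fin n, ∑ S ∈ ((Finset.univ.erase i).powerset.filter (fun S => S.card = s)),
        f (insert i S)
      = ∑ T ∈ Finset.univ.powerset.filter (fun T : Finset (Fin n) => T.card = s + 1),
          ((s + 1 : ℕ) : ℝ) * f T := by
  have hR : ∀ T ∈ Finset.univ.powerset.filter (fun T : Finset (Fin n) => T.card = s + 1),
      ((s + 1 : ℕ) : ℝ) * f T = ∑ i ∈ T, f T := by
    intro T hT
    simp only [mem_filter] at hT
    rw [Finset.sum_const, hT.2, nsmul_eq_mul]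
  rw [Finset.sum_congr rfl hR, Finset.sum_sigma', Finset.sum_sigma']
  refine Finset.sum_nbij' (fun p => ⟨insert p.1 p.2, p.1⟩) (fun p => ⟨p.2, p.1.erase p.2⟩)
    ?_ ?_ ?_ ?_ ?_
  · rintro ⟨i, S⟩ h
    simp only [mem_sigma, mem_univ, mem_filter, mem_powerset, true_and] at h ⊢
    have hiS : i ∉ S := fun hi => (Finset.mem_erase.mp (h.1 hi)).1 rfl
    exact ⟨⟨Finset.subset_univ _, by rw [Finset.card_insert_of_notMem hiS, h.2]⟩,
      Finset.mem_insert_self _ _⟩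
  · rintro ⟨T, i⟩ h
    simp only [mem_sigma, mem_univ, mem_filter, mem_powerset, true_and] at h ⊢
    exact ⟨Finset.erase_subset_erase i h.1.1, by rw [Finset.card_erase_of_mem h.2, h.1.2]; omega⟩
  · rintro ⟨i, S⟩ h
    simp only [mem_sigma, mem_univ, mem_filter, mem_powerset, true_and] at h
    have hiS : i ∉ S := fun hi => (Finset.mem_erase.mp (h.1 hi)).1 rfl
    simp [Finset.erase_insert hiS]
  · rintro ⟨T, i⟩ h
    simp only [mem_sigma, mem_univ, mem_filter, mem_powerset, true_and] at h
    simp [Finset.insert_erase h.2]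
  · rintro ⟨i, S⟩ h
    rfl

lemma sum_noins (n s : ℕ) (f : Finset (Fin n) → ℝ) :
    ∑ i : Fin n, ∑ S ∈ ((Finset.univ.erase i).powerset.filter (fun S => S.card = s)),
        f S
      = ∑ T ∈ Finset.univ.powerset.filter (fun T : Finset (Fin n) => T.card = s),
          ((n - s : ℕ) : ℝ) * f T := by
  have hR : ∀ T ∈ Finset.univ.powerset.filter (fun T : Finset (Fin n) => T.card = s),
      ((n - s : ℕ) : ℝ) * f T = ∑ i ∈ Finset.univ \ T, f T := by
    intro T hT
    simp only [mem_filter] at hT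
    rw [Finset.sum_const, Finset.card_sdiff_of_subset (Finset.subset_univ _), Finset.card_univ,
      Fintype.card_fin, hT.2, nsmul_eq_mul]
  rw [Finset.sum_congr rfl hR, Finset.sum_sigma', Finset.sum_sigma']
  refine Finset.sum_nbij' (fun p => ⟨p.2, p.1⟩) (fun p => ⟨p.2, p.1⟩) ?_ ?_ ?_ ?_ ?_
  · rintro ⟨i, S⟩ h
    simp only [mem_sigma, mem_univ, mem_filter, mem_powerset, mem_sdiff, true_and] at h ⊢
    have hiS : i ∉ S := fun hi => (Finset.mem_erase.mp (h.1 hi)).1 rfl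
    exact ⟨⟨Finset.subset_univ _, h.2⟩, hiS⟩
  · rintro ⟨T, i⟩ h
    simp only [mem_sigma, mem_univ, mem_filter, mem_powerset, mem_sdiff, true_and] at h ⊢
    exact ⟨fun x hx => Finset.mem_erase.mpr ⟨fun hxi => h.2 (hxi ▸ hx), mem_univ _⟩, h.1.2⟩
  · rintro ⟨i, S⟩ h; rfl
  · rintro ⟨T, i⟩ h; rfl
  · rintro ⟨i, S⟩ h; rfl

/-- the `k`-SED value is efficient. -/
theorem kSED_efficient (n k : ℕ) (hk : 1 ≤ k) (hkn : k ≤ n)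
    (v : Finset (Fin n) → ℝ) (hv : v ∅ = 0) :
    ∑ i, kSED n k v i = v Finset.univ := by
  have hn : 1 ≤ n := le_trans hk hkn
  have hnfac : (n.factorial : ℝ) ≠ 0 := by positivity
  simp only [kSED, Finset.sum_add_distrib]
  -- FIRST PART
  have h1 : (∑ i : Fin n, ∑ S ∈ ((Finset.univ.erase i).powerset.filter (fun S => S.card = k - 1)),
      (((n - k).factorial * (k - 1).factorial : ℝ) / n.factorial) * v (insert i S))
      = kc n k * kA n v k := by
    rw [sum_ins n (k - 1) (fun T => (((n - k).factorial * (k - 1).factorial : ℝ) / n.factorial) * v T)]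
    have hk1 : k - 1 + 1 = k := by omega
    rw [hk1, kA, Finset.mul_sum]
    refine Finset.sum_congr rfl fun T _ => ?_
    have hfac : (k.factorial : ℝ) = (k : ℝ) * ((k - 1).factorial : ℝ) := by
      rw [← Nat.mul_factorial_pred (by omega : k ≠ 0)]; push_cast; ring
    rw [kc]
    field_simp
    rw [hfac]; ring
  rw [h1]
  -- SECOND PART: group by cardinality
  have h2 : ∀ i : Fin n,
      (∑ S ∈ ((Finset.univ.erase i).powerset.filter (fun S => k ≤ S.card)),
        (((n - S.card - 1).factorial * S.card.factorial : ℝ) / n.factorial) *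
          (v (insert i S) - v S))
      = ∑ s ∈ Finset.Ico k n, ∑ S ∈ ((Finset.univ.erase i).powerset.filter (fun S => S.card = s)),
          (((n - s - 1).factorial * s.factorial : ℝ) / n.factorial) *
            (v (insert i S) - v S) := by
    intro i
    have hmaps : ∀ S ∈ (Finset.univ.erase i).powerset.filter (fun S => k ≤ S.card),
        S.card ∈ Finset.Ico k n := by
      intro S hS
      simp only [mem_filter, mem_powerset] at hS
      rw [Finset.mem_Ico]
      refine ⟨hS.2, lt_of_le_of_lt (Finset.card_le_card hS.1) ?_⟩
      rw [Finset.card_erase_of_mem (mem_univ i), Finset.card_univ, Fintype.card_fin]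
      omega
    rw [← Finset.sum_fiberwise_of_maps_to hmaps]
    refine Finset.sum_congr rfl fun s hs => ?_
    rw [Finset.mem_Ico] at hs
    have hset : ((Finset.univ.erase i).powerset.filter (fun S => k ≤ S.card)).filter
        (fun S => S.card = s) = (Finset.univ.erase i).powerset.filter (fun S => S.card = s) := by
      ext S
      simp only [mem_filter, mem_powerset]
      constructor
      · rintro ⟨⟨h1, _⟩, h3⟩; exact ⟨h1, h3⟩
      · rintro ⟨h1, h3⟩; exact ⟨⟨h1, h3 ▸ hs.1⟩, h3⟩
    rw [hset]
    refine Finset.sum_congr rfl fun S hS => ?_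
    simp only [mem_filter] at hS
    rw [hS.2]
  simp only [h2]
  rw [Finset.sum_comm]
  -- per-size telescoping term
  have h3 : ∀ s ∈ Finset.Ico k n,
      (∑ i : Fin n, ∑ S ∈ ((Finset.univ.erase i).powerset.filter (fun S => S.card = s)),
        (((n - s - 1).factorial * s.factorial : ℝ) / n.factorial) * (v (insert i S) - v S))
      = kc n (s + 1) * kA n v (s + 1) - kc n s * kA n v s := by
    intro s hs
    rw [Finset.mem_Ico] at hs
    have hsplit : ∀ i : Fin n,
        (∑ S ∈ ((Finset.univ.erase i).powerset.filter (fun S => S.card = s)),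
          (((n - s - 1).factorial * s.factorial : ℝ) / n.factorial) * (v (insert i S) - v S))
        = (∑ S ∈ ((Finset.univ.erase i).powerset.filter (fun S => S.card = s)),
            (((n - s - 1).factorial * s.factorial : ℝ) / n.factorial) * v (insert i S))
          - ∑ S ∈ ((Finset.univ.erase i).powerset.filter (fun S => S.card = s)),
            (((n - s - 1).factorial * s.factorial : ℝ) / n.factorial) * v S := by
      intro i
      rw [← Finset.sum_sub_distrib]
      exact Finset.sum_congr rfl fun S _ => by ring
    simp only [hsplit]
    rw [Finset.sum_sub_distrib]
    rw [sum_ins n s (fun T => (((n - s - 1).factorial * s.factorial : ℝ) / n.factorial) * v T)]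
    rw [sum_noins n s (fun T => (((n - s - 1).factorial * s.factorial : ℝ) / n.factorial) * v T)]
    have e1 : ∑ T ∈ Finset.univ.powerset.filter (fun T : Finset (Fin n) => T.card = s + 1),
        ((s + 1 : ℕ) : ℝ) * ((((n - s - 1).factorial * s.factorial : ℝ) / n.factorial) * v T)
        = kc n (s + 1) * kA n v (s + 1) := by
      rw [kA, Finset.mul_sum]
      refine Finset.sum_congr rfl fun T _ => ?_
      rw [kc]
      have h1 : n - (s + 1) = n - s - 1 := by omega
      rw [h1, Nat.factorial_succ]
      push_cast
      field_simp
    have e2 : ∑ T ∈ Finset.univ.powerset.filter (fun T : Finset (Fin n) => T.card = s),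
        ((n - s : ℕ) : ℝ) * ((((n - s - 1).factorial * s.factorial : ℝ) / n.factorial) * v T)
        = kc n s * kA n v s := by
      rw [kA, Finset.mul_sum]
      refine Finset.sum_congr rfl fun T _ => ?_
      rw [kc]
      have hfac : ((n - s).factorial : ℝ) = ((n - s : ℕ) : ℝ) * ((n - s - 1).factorial : ℝ) := by
        rw [← Nat.mul_factorial_pred (by omega : n - s ≠ 0)]; push_cast; ring
      rw [hfac]
      field_simp
    rw [e1, e2]
  rw [Finset.sum_congr rfl h3]
  -- telescoping
  have htel : ∑ s ∈ Finset.Ico k n, (kc n (s + 1) * kA n v (s + 1) - kc n s * kA n v s)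
      = kc n n * kA n v n - kc n k * kA n v k := by
    rw [Finset.sum_Ico_eq_sub _ hkn,
      Finset.sum_range_sub (fun s => kc n s * kA n v s),
      Finset.sum_range_sub (fun s => kc n s * kA n v s)]
    ring
  rw [htel]
  have hcn : kc n n = 1 := by
    rw [kc, Nat.sub_self, Nat.factorial_zero]
    field_simp
    norm_num
  have hAn : kA n v n = v Finset.univ := by
    rw [kA]
    have : Finset.univ.powerset.filter (fun T : Finset (Fin n) => T.card = n)
        = {(Finset.univ : Finset (Fin n))} := by
      ext T
      simp only [mem_filter, mem_powerset, mem_singleton]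
      constructor
      · rintro ⟨-, h2⟩
        exact Finset.eq_univ_of_card T (by rw [Fintype.card_fin]; exact h2)
      · rintro rfl
        exact ⟨subset_rfl, by rw [Finset.card_univ, Fintype.card_fin]⟩
    rw [this, Finset.sum_singleton]
  rw [hcn, hAn]
  ring
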